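/- Let μ ∈ ℝ^d with μ ≠ 0, let Σ ∈ ℝ^{d×d} be symmetric positive definite, and let η > 0 satisfy η‖Σ‖_op ≤ 1/6. If ξ is a random vector with Gaussian distribution N(μ, ηΣ), then E[ exp( ⟨ξ, μ⟩/|μ| + (3/2)|ξ − μ|² ) ] ≤ (1 − 3η‖Σ‖_op)^{−d/2} exp( η|Σ^{1/2}μ|² / (2(1 − 3η‖Σ‖_op)|μ|²) + |μ| ) ≤ exp( |μ| + (3d + 1) η‖Σ‖_op ). -/

import Mathlib

open MeasureTheory Real
open scoped RealInnerProductSpace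
open Matrix
open scoped ENNReal NNReal Matrix
set_option maxHeartbeats 1000000

/-- The operator (spectral) norm of a real matrix, viewed as a linear map on
Euclidean space. -/
noncomputable def matOpNorm {d : ℕ} (A : Matrix (Fin d) (Fin d) ℝ) : ℝ :=
  ‖LinearMap.toContinuousLinearMap (Matrix.toEuclideanLin A)‖

/-- The Gaussian measure on `ℝ^d` with mean `μ` and (positive definite) covariance
matrix `Γ`, defined through its density with respect to Lebesgue measure. -/
noncomputable def gaussianMeasure {d : ℕ} (μ : EuclideanSpace ℝ (Fin d))
    (Γ : Matrix (Fin d) (Fin d) ℝ) : Measure (EuclideanSpace ℝ (Fin d)) :=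
  volume.withDensity fun x =>
    ENNReal.ofReal (Real.sqrt (((2 * π) ^ d * Γ.det))⁻¹ *
      Real.exp (-⟪x - μ, Matrix.toEuclideanLin Γ⁻¹ (x - μ)⟫ / 2))

/-- The positive semidefinite square root of a positive semidefinite matrix, as
`Matrix.PosSemidef.sqrt` was defined in the older Mathlib. -/
noncomputable def Matrix.PosSemidef.sqrtOld {n : Type*} [Fintype n] [DecidableEq n]
    {A : Matrix n n ℝ} (hA : A.PosSemidef) : Matrix n n ℝ :=
  (hA.1.eigenvectorUnitary : Matrix n n ℝ) * Matrix.diagonal ((↑) ∘ (√·) ∘ hA.1.eigenvalues) *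
    (star hA.1.eigenvectorUnitary : Matrix n n ℝ)

lemma aux_sqrtOld_mul_self {n : Type*} [Fintype n] [DecidableEq n]
    {A : Matrix n n ℝ} (hA : A.PosSemidef) :
    Matrix.PosSemidef.sqrtOld hA * Matrix.PosSemidef.sqrtOld hA = A := by
  have hU : (star hA.1.eigenvectorUnitary : Matrix n n ℝ) * hA.1.eigenvectorUnitary = 1 :=
    Unitary.coe_star_mul_self _
  have hD : Matrix.diagonal (((↑) ∘ (√·) ∘ hA.1.eigenvalues) : n → ℝ) *
      Matrix.diagonal ((↑) ∘ (√·) ∘ hA.1.eigenvalues)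
      = Matrix.diagonal (RCLike.ofReal ∘ hA.1.eigenvalues : n → ℝ) := by
    rw [Matrix.diagonal_mul_diagonal]; congr 1; funext i
    simp [Real.mul_self_sqrt (hA.eigenvalues_nonneg i)]
  unfold Matrix.PosSemidef.sqrtOld
  conv_rhs => rw [hA.1.spectral_theorem, Unitary.conjStarAlgAut_apply]
  rw [← hD]
  simp only [Matrix.mul_assoc]
  rw [← Matrix.mul_assoc (star _ : Matrix n n ℝ) _ (Matrix.diagonal _ * _), hU, Matrix.one_mul]

lemma aux_sqrtOld_transpose {n : Type*} [Fintype n] [DecidableEq n]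
    {A : Matrix n n ℝ} (hA : A.PosSemidef) :
    (Matrix.PosSemidef.sqrtOld hA)ᵀ = Matrix.PosSemidef.sqrtOld hA := by
  unfold Matrix.PosSemidef.sqrtOld
  rw [Matrix.transpose_mul, Matrix.transpose_mul, Matrix.diagonal_transpose, Matrix.mul_assoc]
  simp [Matrix.star_eq_conjTranspose, Matrix.conjTranspose_eq_transpose_of_trivial]

section Aux

variable {d : ℕ}

lemma aux_inner_te (A : Matrix (Fin d) (Fin d) ℝ) (x y : EuclideanSpace ℝ (Fin d)) :
    ⟪x, Matrix.toEuclideanLin A y⟫ = dotProduct (x : Fin d → ℝ) (A.mulVec (y : Fin d → ℝ)) := by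
  simp [PiLp.inner_apply, dotProduct]
  exact Finset.sum_congr rfl fun i _ => mul_comm _ _

lemma aux_inner_dot (x y : EuclideanSpace ℝ (Fin d)) :
    ⟪x, y⟫ = dotProduct (x : Fin d → ℝ) (y : Fin d → ℝ) := by
  simp [PiLp.inner_apply, dotProduct]
  exact Finset.sum_congr rfl fun i _ => mul_comm _ _

lemma aux_quad (Q S : Matrix (Fin d) (Fin d) ℝ) (x y : EuclideanSpace ℝ (Fin d)) :
    ⟪Matrix.toEuclideanLin Q x, Matrix.toEuclideanLin S y⟫
      = dotProduct (x : Fin d → ℝ) ((Qᵀ * S).mulVec (y : Fin d → ℝ)) := by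
  rw [aux_inner_te]
  show dotProduct (Q.mulVec x) (S.mulVec y) = _
  rw [Matrix.dotProduct_mulVec, ← Matrix.vecMul_transpose, Matrix.vecMul_vecMul]
  exact (Matrix.dotProduct_mulVec x (Qᵀ * S) y).symm

lemma aux_te_comp (A B : Matrix (Fin d) (Fin d) ℝ) (x : EuclideanSpace ℝ (Fin d)) :
    Matrix.toEuclideanLin A (Matrix.toEuclideanLin B x) = Matrix.toEuclideanLin (A * B) x := by
  ext i
  show (A.mulVec (B.mulVec x)) i = ((A * B).mulVec x) i
  rw [Matrix.mulVec_mulVec]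

lemma aux_det_te (Q : Matrix (Fin d) (Fin d) ℝ) :
    LinearMap.det (Matrix.toEuclideanLin Q : EuclideanSpace ℝ (Fin d) →ₗ[ℝ] _) = Q.det := by
  rw [Matrix.toEuclideanLin_eq_toLin, LinearMap.det_toLin]

lemma aux_cov (Q : Matrix (Fin d) (Fin d) ℝ) (hQ : Q.det ≠ 0)
    (f : EuclideanSpace ℝ (Fin d) → ℝ) (hf : Continuous f) :
    ∫ z, f z = |Q.det| * ∫ w, f (Matrix.toEuclideanLin Q w) := by
  have hdet : LinearMap.det (Matrix.toEuclideanLin Q : EuclideanSpace ℝ (Fin d) →ₗ[ℝ] _) ≠ 0 := by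
    rw [aux_det_te]; exact hQ
  have hmap : Measure.map (Matrix.toEuclideanLin Q) volume
      = ENNReal.ofReal |(Q.det)⁻¹| • volume := by
    rw [Measure.map_linearMap_addHaar_eq_smul_addHaar volume hdet, aux_det_te]
  have hc : Continuous (Matrix.toEuclideanLin Q : EuclideanSpace ℝ (Fin d) →ₗ[ℝ] _) :=
    LinearMap.continuous_of_finiteDimensional _
  have h1 : ∫ w, f (Matrix.toEuclideanLin Q w)
      = ∫ z, f z ∂(Measure.map (Matrix.toEuclideanLin Q) volume) := by
    rw [integral_map hc.aemeasurable hf.aestronglyMeasurable]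
  rw [h1, hmap, integral_smul_measure, ENNReal.toReal_ofReal (abs_nonneg _), abs_inv,
    smul_eq_mul, ← mul_assoc, mul_inv_cancel₀ (by simpa using hQ), one_mul]

lemma aux_gauss_int {b : ℝ} (hb : 0 < b) (w : EuclideanSpace ℝ (Fin d)) :
    ∫ v : EuclideanSpace ℝ (Fin d), rexp (-b * ‖v‖ ^ 2 + ⟪w, v⟫)
      = (π / b) ^ ((d : ℝ) / 2) * rexp (‖w‖ ^ 2 / (4 * b)) := by
  have h := GaussianFourier.integral_cexp_neg_mul_sq_norm_add (V := EuclideanSpace ℝ (Fin d))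
    (b := (b : ℂ)) (by simpa using hb) 1 w
  have hre : ∀ v : EuclideanSpace ℝ (Fin d),
      ((rexp (-b * ‖v‖ ^ 2 + ⟪w, v⟫) : ℝ) : ℂ)
        = Complex.exp (-(b:ℂ) * (‖v‖:ℂ) ^ 2 + 1 * ((⟪w, v⟫ : ℝ) : ℂ)) := by
    intro v
    rw [Complex.ofReal_exp]
    push_cast
    ring_nf
  have hoi : ∫ v : EuclideanSpace ℝ (Fin d), ((rexp (-b * ‖v‖ ^ 2 + ⟪w, v⟫) : ℝ) : ℂ)
      = ((∫ v : EuclideanSpace ℝ (Fin d), rexp (-b * ‖v‖ ^ 2 + ⟪w, v⟫) : ℝ) : ℂ) :=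
    integral_ofReal
  rw [← Complex.ofReal_inj, ← hoi]
  simp_rw [hre]
  rw [h, finrank_euclideanSpace_fin]
  rw [Complex.ofReal_mul, Complex.ofReal_exp,
    Complex.ofReal_cpow (by positivity : (0:ℝ) ≤ π / b)]
  push_cast
  ring_nf

lemma aux_gauss_integrable {b : ℝ} (hb : 0 < b) (w : EuclideanSpace ℝ (Fin d)) :
    Integrable (fun v : EuclideanSpace ℝ (Fin d) => rexp (-b * ‖v‖ ^ 2 + ⟪w, v⟫)) := by
  have h := (GaussianFourier.integrable_cexp_neg_mul_sq_norm_add (V := EuclideanSpace ℝ (Fin d))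
    (b := (b : ℂ)) (by simpa using hb) 1 w).norm
  refine h.congr (Filter.Eventually.of_forall fun v => ?_)
  simp only [Complex.norm_exp]
  congr 1
  simp [← Complex.ofReal_pow]

lemma aux_wd (ρ : EuclideanSpace ℝ (Fin d) → ℝ) (hρm : Measurable ρ) (hρ : ∀ x, 0 ≤ ρ x)
    (g : EuclideanSpace ℝ (Fin d) → ℝ) :
    ∫ x, g x ∂(volume.withDensity fun x => ENNReal.ofReal (ρ x)) = ∫ x, ρ x * g x := by
  have : (fun x => ENNReal.ofReal (ρ x)) = fun x => ((fun y => (ρ y).toNNReal) x : ℝ≥0∞) := rfl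
  rw [this, integral_withDensity_eq_integral_smul hρm.real_toNNReal g]
  congr 1
  funext x
  rw [NNReal.smul_def, smul_eq_mul, Real.coe_toNNReal _ (hρ x)]

lemma aux_opnorm {d : ℕ} (A : Matrix (Fin d) (Fin d) ℝ) (w : EuclideanSpace ℝ (Fin d)) :
    ‖Matrix.toEuclideanLin A w‖ ≤ matOpNorm A * ‖w‖ := by
  unfold matOpNorm
  exact (LinearMap.toContinuousLinearMap (Matrix.toEuclideanLin A)).le_opNorm w

lemma aux_te_symm (Q : Matrix (Fin d) (Fin d) ℝ) (hQt : Qᵀ = Q) (x y : EuclideanSpace ℝ (Fin d)) :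
    ⟪Matrix.toEuclideanLin Q x, y⟫ = ⟪x, Matrix.toEuclideanLin Q y⟫ := by
  rw [real_inner_comm, aux_inner_te, aux_inner_te, dotProduct_comm,
    ← Matrix.vecMul_transpose, ← Matrix.dotProduct_mulVec, hQt]

lemma aux_opnorm_nonneg {d : ℕ} (A : Matrix (Fin d) (Fin d) ℝ) : 0 ≤ matOpNorm A := by
  unfold matOpNorm; positivity

end Aux

theorem stmt18 {d : ℕ} (μ : EuclideanSpace ℝ (Fin d)) (hμ : μ ≠ 0)
    (Γ : Matrix (Fin d) (Fin d) ℝ) (hΓsymm : Γ.IsSymm) (hΓ : Γ.PosDef)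
    (η : ℝ) (hη : 0 < η) (h6 : η * matOpNorm Γ ≤ 1 / 6) :
    (∫ x, Real.exp (⟪x, μ⟫ / ‖μ‖ + (3 / 2) * ‖x - μ‖ ^ 2) ∂(gaussianMeasure μ (η • Γ)))
        ≤ (1 - 3 * η * matOpNorm Γ) ^ (-(d : ℝ) / 2) *
          Real.exp (η * ‖Matrix.toEuclideanLin (Matrix.PosSemidef.sqrtOld hΓ.posSemidef) μ‖ ^ 2 /
              (2 * (1 - 3 * η * matOpNorm Γ) * ‖μ‖ ^ 2) + ‖μ‖) ∧
      (1 - 3 * η * matOpNorm Γ) ^ (-(d : ℝ) / 2) *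
          Real.exp (η * ‖Matrix.toEuclideanLin (Matrix.PosSemidef.sqrtOld hΓ.posSemidef) μ‖ ^ 2 /
              (2 * (1 - 3 * η * matOpNorm Γ) * ‖μ‖ ^ 2) + ‖μ‖)
        ≤ Real.exp (‖μ‖ + (3 * d + 1) * η * matOpNorm Γ) := by
  have hμn : (0:ℝ) < ‖μ‖ := norm_pos_iff.mpr hμ
  set N : ℝ := matOpNorm Γ with hNdef
  have hN0 : 0 ≤ N := aux_opnorm_nonneg Γ
  set s : ℝ := η * N with hsdef
  have hs0 : 0 ≤ s := mul_nonneg hη.le hN0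
  have hs6 : s ≤ 1 / 6 := h6
  set t : ℝ := 1 - 3 * s with htdef
  have ht2 : (1:ℝ)/2 ≤ t := by simp only [htdef]; linarith
  have ht0 : (0:ℝ) < t := by linarith
  set B : Matrix (Fin d) (Fin d) ℝ := Matrix.PosSemidef.sqrtOld hΓ.posSemidef with hBdef
  set K : ℝ := ‖Matrix.toEuclideanLin B μ‖ ^ 2 with hKdef
  have hK0 : 0 ≤ K := sq_nonneg _
  -- operator norm bound for Γ-quadratic forms
  have hquadΓ : ∀ w : EuclideanSpace ℝ (Fin d), ⟪w, Matrix.toEuclideanLin Γ w⟫ ≤ N * ‖w‖ ^ 2 := by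
    intro w
    have h1 : ⟪w, Matrix.toEuclideanLin Γ w⟫ ≤ ‖w‖ * ‖Matrix.toEuclideanLin Γ w‖ :=
      real_inner_le_norm _ _
    have h2 : ‖Matrix.toEuclideanLin Γ w‖ ≤ N * ‖w‖ := aux_opnorm Γ w
    nlinarith [norm_nonneg w, norm_nonneg (Matrix.toEuclideanLin Γ w)]
  have hBt : Bᵀ = B := aux_sqrtOld_transpose hΓ.posSemidef
  have hBB : B * B = Γ := aux_sqrtOld_mul_self hΓ.posSemidef
  have hdetΓ : 0 < Γ.det := hΓ.det_pos
  have hdetB : B.det * B.det = Γ.det := by rw [← Matrix.det_mul, hBB]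
  have hdetB0 : B.det ≠ 0 := by
    intro h; rw [h, zero_mul] at hdetB; exact hdetΓ.ne' hdetB.symm
  -- K = ⟪μ, Γ μ⟫ ≤ N ‖μ‖²
  have hKform : K = ⟪μ, Matrix.toEuclideanLin Γ μ⟫ := by
    rw [hKdef, ← real_inner_self_eq_norm_sq, aux_quad, hBt, hBB, aux_inner_te]
  have hKN : K ≤ N * ‖μ‖ ^ 2 := hKform ▸ hquadΓ μ
  rw [show (1 - 3 * η * N : ℝ) = t from by rw [htdef, hsdef]; ring]
  -- the second inequality
  have part2 : t ^ (-(d : ℝ) / 2) *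
      Real.exp (η * K / (2 * t * ‖μ‖ ^ 2) + ‖μ‖)
        ≤ Real.exp (‖μ‖ + (3 * d + 1) * η * N) := by
    have hrpow : t ^ (-(d : ℝ) / 2) ≤ Real.exp (3 * d * s) := by
      rw [Real.rpow_def_of_pos ht0, Real.exp_le_exp]
      have hlog : -Real.log t ≤ 6 * s := by
        have h1 : Real.log t⁻¹ ≤ t⁻¹ - 1 := Real.log_le_sub_one_of_pos (by positivity)
        rw [Real.log_inv] at h1
        nlinarith [mul_inv_cancel₀ ht0.ne', mul_nonneg hs0 (by linarith : (0:ℝ) ≤ 1/6 - s),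
          mul_pos ht0 ht0]
      nlinarith [mul_le_mul_of_nonneg_left hlog (by positivity : (0:ℝ) ≤ (d:ℝ)/2)]
    have hexp : η * K / (2 * t * ‖μ‖ ^ 2) ≤ s := by
      rw [div_le_iff₀ (by positivity)]
      have hηK : η * K ≤ s * ‖μ‖ ^ 2 := by
        rw [hsdef]
        calc η * K ≤ η * (N * ‖μ‖ ^ 2) := by nlinarith
          _ = η * N * ‖μ‖ ^ 2 := by ring
      nlinarith [mul_le_mul_of_nonneg_left (by linarith : (1:ℝ) ≤ 2 * t)
        (mul_nonneg hs0 (sq_nonneg ‖μ‖))]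
    calc t ^ (-(d : ℝ) / 2) * Real.exp (η * K / (2 * t * ‖μ‖ ^ 2) + ‖μ‖)
        ≤ Real.exp (3 * d * s) * Real.exp (s + ‖μ‖) := by
          apply mul_le_mul hrpow (Real.exp_le_exp.mpr (by linarith)) (Real.exp_pos _).le
            (Real.exp_pos _).le
      _ = Real.exp (‖μ‖ + (3 * d + 1) * η * N) := by
          rw [← Real.exp_add]; congr 1; rw [hsdef]; ring
  refine ⟨?_, part2⟩
  -- notation
  set c : ℝ := Real.sqrt (((2 * π) ^ d * (η • Γ).det))⁻¹ with hcdef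
  have hdetS : (η • Γ).det = η ^ d * Γ.det := by simp [Matrix.det_smul]
  have hdetSpos : 0 < (η • Γ).det := by rw [hdetS]; positivity
  have hc0 : 0 ≤ c := Real.sqrt_nonneg _
  have hc2 : c ^ 2 = (((2 * π) ^ d * (η • Γ).det))⁻¹ := by
    rw [hcdef, Real.sq_sqrt (by positivity)]
  set Q : Matrix (Fin d) (Fin d) ℝ := Real.sqrt η • B with hQdef
  have hQt : Qᵀ = Q := by rw [hQdef, Matrix.transpose_smul, hBt]
  have hQQ : Q * Q = η • Γ := by
    rw [hQdef, Matrix.smul_mul, Matrix.mul_smul, smul_smul, Real.mul_self_sqrt hη.le, hBB]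
  have hQdet : Q.det = (Real.sqrt η) ^ d * B.det := by
    rw [hQdef, Matrix.det_smul]; simp
  have hQdet0 : Q.det ≠ 0 := by
    rw [hQdet]
    exact mul_ne_zero (pow_ne_zero _ (Real.sqrt_ne_zero'.mpr hη)) hdetB0
  have hQunit : IsUnit Q.det := Ne.isUnit hQdet0
  have hQMQ : Qᵀ * ((η • Γ)⁻¹ * Q) = 1 := by
    rw [hQt, ← hQQ, Matrix.mul_inv_rev, mul_assoc, Matrix.nonsing_inv_mul Q hQunit,
      Matrix.mul_one, Matrix.mul_nonsing_inv Q hQunit]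
  have hquadM : ∀ w : EuclideanSpace ℝ (Fin d),
      ⟪Matrix.toEuclideanLin Q w, Matrix.toEuclideanLin (η • Γ)⁻¹ (Matrix.toEuclideanLin Q w)⟫
        = ‖w‖ ^ 2 := by
    intro w
    rw [aux_te_comp, aux_quad, hQMQ, Matrix.one_mulVec, ← aux_inner_dot,
      real_inner_self_eq_norm_sq]
  have hnormT : ∀ w : EuclideanSpace ℝ (Fin d),
      ‖Matrix.toEuclideanLin Q w‖ ^ 2 = η * ⟪w, Matrix.toEuclideanLin Γ w⟫ := by
    intro w
    rw [← real_inner_self_eq_norm_sq, aux_quad, hQt, hQQ, Matrix.smul_mulVec,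
      dotProduct_smul, smul_eq_mul, ← aux_inner_te]
  -- the density and integrand
  set ρ : EuclideanSpace ℝ (Fin d) → ℝ := fun x =>
    c * Real.exp (-⟪x - μ, Matrix.toEuclideanLin (η • Γ)⁻¹ (x - μ)⟫ / 2) with hρdef
  have hTMc : Continuous (Matrix.toEuclideanLin ((η • Γ)⁻¹) :
      EuclideanSpace ℝ (Fin d) →ₗ[ℝ] _) := LinearMap.continuous_of_finiteDimensional _
  have hsubc : Continuous fun x : EuclideanSpace ℝ (Fin d) => x - μ :=
    continuous_id.sub continuous_const
  have hρc : Continuous ρ :=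
    continuous_const.mul (Real.continuous_exp.comp
      (((hsubc.inner (hTMc.comp hsubc)).neg).div_const 2))
  have hρ0 : ∀ x, 0 ≤ ρ x := fun x => mul_nonneg hc0 (Real.exp_pos _).le
  set g : EuclideanSpace ℝ (Fin d) → ℝ := fun z =>
    c * Real.exp (‖μ‖ + (⟪z, μ⟫ / ‖μ‖ + 3 / 2 * ‖z‖ ^ 2
      - ⟪z, Matrix.toEuclideanLin (η • Γ)⁻¹ z⟫ / 2)) with hgdef
  have hgc : Continuous g := by
    apply continuous_const.mul
    apply Real.continuous_exp.comp
    apply continuous_const.add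
    apply Continuous.sub
    · exact ((continuous_id.inner continuous_const).div_const _).add
        (continuous_const.mul ((continuous_norm).pow 2))
    · exact ((continuous_id.inner (hTMc.comp continuous_id)).div_const 2)
  -- Step 1: withDensity to Lebesgue
  have step1 : (∫ x, Real.exp (⟪x, μ⟫ / ‖μ‖ + (3 / 2) * ‖x - μ‖ ^ 2)
      ∂(gaussianMeasure μ (η • Γ)))
      = ∫ x, ρ x * Real.exp (⟪x, μ⟫ / ‖μ‖ + (3 / 2) * ‖x - μ‖ ^ 2) := by
    rw [gaussianMeasure]
    exact aux_wd ρ hρc.measurable hρ0 _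
  -- Step 2: pointwise rewriting and translation
  have step2 : (∫ x, ρ x * Real.exp (⟪x, μ⟫ / ‖μ‖ + (3 / 2) * ‖x - μ‖ ^ 2))
      = ∫ z, g z := by
    have hpt : ∀ x : EuclideanSpace ℝ (Fin d),
        ρ x * Real.exp (⟪x, μ⟫ / ‖μ‖ + (3 / 2) * ‖x - μ‖ ^ 2) = g (x - μ) := by
      intro x
      have e : ⟪x, μ⟫ = ⟪x - μ, μ⟫ + ‖μ‖ ^ 2 := by
        rw [inner_sub_left, real_inner_self_eq_norm_sq]; ring
      rw [hρdef, hgdef]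
      simp only
      rw [mul_assoc, ← Real.exp_add, e]
      congr 1
      field_simp
      ring
    calc (∫ x, ρ x * Real.exp (⟪x, μ⟫ / ‖μ‖ + (3 / 2) * ‖x - μ‖ ^ 2))
        = ∫ x, g (x - μ) := by simp_rw [hpt]
      _ = ∫ z, g z := integral_sub_right_eq_self g μ
  -- Step 3: change of variables
  have step3 : (∫ z, g z) = |Q.det| * ∫ w, g (Matrix.toEuclideanLin Q w) :=
    aux_cov Q hQdet0 g hgc
  -- Step 4: bound the transformed integrand
  set b : ℝ := t / 2 with hbdef
  have hb : 0 < b := by rw [hbdef]; linarith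
  set w₀ : EuclideanSpace ℝ (Fin d) := ‖μ‖⁻¹ • Matrix.toEuclideanLin Q μ with hw₀def
  have step4 : (∫ w, g (Matrix.toEuclideanLin Q w))
      ≤ ∫ w, (c * Real.exp ‖μ‖) * Real.exp (-b * ‖w‖ ^ 2 + ⟪w₀, w⟫) := by
    apply integral_mono_of_nonneg
    · exact Filter.Eventually.of_forall fun w => mul_nonneg hc0 (Real.exp_pos _).le
    · exact (aux_gauss_integrable hb w₀).const_mul _
    · apply Filter.Eventually.of_forall
      intro w
      have h1 : ⟪Matrix.toEuclideanLin Q w, μ⟫ = ⟪Matrix.toEuclideanLin Q μ, w⟫ := by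
        rw [aux_te_symm Q hQt, real_inner_comm]
      have h2 : ⟪w₀, w⟫ = ‖μ‖⁻¹ * ⟪Matrix.toEuclideanLin Q μ, w⟫ := by
        rw [hw₀def, real_inner_smul_left]
      have h3 : ‖Matrix.toEuclideanLin Q w‖ ^ 2 ≤ s * ‖w‖ ^ 2 := by
        rw [hnormT w, hsdef]
        have := hquadΓ w
        nlinarith
      have h4 : ⟪Matrix.toEuclideanLin Q w,
          Matrix.toEuclideanLin (η • Γ)⁻¹ (Matrix.toEuclideanLin Q w)⟫ = ‖w‖ ^ 2 := hquadM w
      rw [hgdef]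
      simp only
      rw [mul_assoc, ← Real.exp_add]
      apply mul_le_mul_of_nonneg_left _ hc0
      rw [Real.exp_le_exp]
      rw [h4, h1, h2]
      have hlin : ⟪Matrix.toEuclideanLin Q μ, w⟫ / ‖μ‖
          = ‖μ‖⁻¹ * ⟪Matrix.toEuclideanLin Q μ, w⟫ := by
        rw [div_eq_inv_mul]
      rw [hlin]
      have hbt : b = (1 - 3 * s) / 2 := by rw [hbdef, htdef]
      rw [hbt]
      nlinarith [h3]
  -- Step 5: evaluate the Gaussian integral
  have step5 : (∫ w, (c * Real.exp ‖μ‖) * Real.exp (-b * ‖w‖ ^ 2 + ⟪w₀, w⟫))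
      = (c * Real.exp ‖μ‖) * ((π / b) ^ ((d : ℝ) / 2) * Real.exp (‖w₀‖ ^ 2 / (4 * b))) := by
    rw [integral_const_mul, aux_gauss_int hb w₀]
  -- norm of w₀
  have hw₀norm : ‖w₀‖ ^ 2 = η * K / ‖μ‖ ^ 2 := by
    have hTQμ : Matrix.toEuclideanLin Q μ = Real.sqrt η • Matrix.toEuclideanLin B μ := by
      rw [hQdef]; simp
    rw [hw₀def, hTQμ, norm_smul, norm_smul, hKdef]
    simp only [Real.norm_eq_abs, abs_of_nonneg (Real.sqrt_nonneg η),
      abs_of_nonneg (inv_nonneg.mpr hμn.le)]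
    rw [mul_pow, mul_pow, Real.sq_sqrt hη.le]
    field_simp
  -- constant computation
  have hCsq : (|Q.det| * c) ^ 2 = ((2 * π) ^ d)⁻¹ := by
    have habs : |Q.det| ^ 2 = η ^ d * Γ.det := by
      have h1 : (Real.sqrt η ^ d) ^ 2 = η ^ d := by
        rw [← pow_mul, mul_comm, pow_mul, Real.sq_sqrt hη.le]
      rw [sq_abs, hQdet, mul_pow, h1, sq, hdetB]
    rw [mul_pow, habs, hc2, hdetS]
    have h2π : (0:ℝ) < (2 * π) ^ d := by positivity
    field_simp
  have hC : |Q.det| * c = Real.sqrt (((2 * π) ^ d)⁻¹) := by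
    rw [← Real.sqrt_sq (mul_nonneg (abs_nonneg _) hc0), hCsq]
  have hconst : |Q.det| * c * (π / b) ^ ((d : ℝ) / 2) = t ^ (-(d : ℝ) / 2) := by
    rw [hC]
    have hP : (0:ℝ) < 2 * π := by positivity
    have e1 : Real.sqrt (((2 * π) ^ d)⁻¹) = (2 * π) ^ (-((d : ℝ) / 2)) := by
      rw [Real.sqrt_eq_rpow, ← Real.rpow_natCast (2 * π) d,
        ← Real.rpow_neg hP.le, ← Real.rpow_mul hP.le]
      norm_num
      ring_nf
    have e2 : π / b = (2 * π) * t⁻¹ := by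
      rw [hbdef]; field_simp
    rw [e1, e2, Real.mul_rpow hP.le (inv_nonneg.mpr ht0.le),
      Real.inv_rpow ht0.le, ← Real.rpow_neg ht0.le, ← mul_assoc,
      ← Real.rpow_add hP, neg_add_cancel, Real.rpow_zero, one_mul, neg_div]
  -- put everything together
  rw [step1, step2, step3]
  calc |Q.det| * ∫ w, g (Matrix.toEuclideanLin Q w)
      ≤ |Q.det| * ∫ w, (c * Real.exp ‖μ‖) * Real.exp (-b * ‖w‖ ^ 2 + ⟪w₀, w⟫) :=
        mul_le_mul_of_nonneg_left step4 (abs_nonneg _)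
    _ = (|Q.det| * c * (π / b) ^ ((d : ℝ) / 2)) *
          Real.exp (‖w₀‖ ^ 2 / (4 * b) + ‖μ‖) := by
        rw [step5, Real.exp_add]; ring
    _ = t ^ (-(d : ℝ) / 2) * Real.exp (η * K / (2 * t * ‖μ‖ ^ 2) + ‖μ‖) := by
        rw [hconst]
        congr 2
        rw [hw₀norm, hbdef]
        field_simp
        ring
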